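/- Let n ≥ 2, let a, b be real numbers with 1 + 2(n-1)a ≠ 0, and let R be an algebraic curvature tensor on ℝⁿ. Then scal(D_{a,b}(R)) = -4b·|Ric(R)|² + (4/n)(b + (n-1)a)·scal(R)² + [2(n²b² - 2(n-1)(a-b)(1-2b))/(1+2(n-1)a)]·|Ric₀(R)|², where |Ric(R)|² denotes the squared Frobenius norm of Ric(R). -/

import Mathlib

open scoped RealInnerProductSpace

noncomputable section

/-- Euclidean `n`-space. -/
abbrev En (n : ℕ) := EuclideanSpace ℝ (Fin n)

/-- Quadrilinear-form-valued objects (curvature-type tensors), given by their values. -/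
abbrev Curv4 (n : ℕ) := En n → En n → En n → En n → ℝ

/-- Bilinear-form-valued objects, given by their values. -/
abbrev Bil (n : ℕ) := En n → En n → ℝ

/-- The standard orthonormal basis vectors of `En n`. -/
def stdB (n : ℕ) (i : Fin n) : En n := EuclideanSpace.single i 1

/-- `R : Curv4 n` is multilinear, i.e. is the evaluation of a quadrilinear map. -/
def IsMultilinear4 {n : ℕ} (R : Curv4 n) : Prop :=
  ∃ L : En n →ₗ[ℝ] En n →ₗ[ℝ] En n →ₗ[ℝ] En n →ₗ[ℝ] ℝ,
    ∀ x y z w, R x y z w = L x y z w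

/-- `R` is an algebraic curvature tensor: a quadrilinear form which is antisymmetric in the
first two arguments, symmetric under exchange of the two pairs, and satisfies the first
Bianchi identity. -/
def IsAlgCurv {n : ℕ} (R : Curv4 n) : Prop :=
  IsMultilinear4 R ∧
  (∀ x y z w, R x y z w = -R y x z w) ∧
  (∀ x y z w, R x y z w = R z w x y) ∧
  (∀ x y z w, R x y z w + R y z x w + R z x y w = 0)

/-- The Ricci curvature `Ric(R)(x,z) = ∑ₚ R(x,eₚ,z,eₚ)`. -/
def ric {n : ℕ} (R : Curv4 n) : Bil n :=
  fun x z => ∑ p, R x (stdB n p) z (stdB n p)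

/-- The scalar curvature `scal(R) = ∑ᵢ Ric(R)(eᵢ,eᵢ)`. -/
def scal {n : ℕ} (R : Curv4 n) : ℝ :=
  ∑ i, ric R (stdB n i) (stdB n i)

/-- The identity (the standard inner product) as a bilinear form. -/
def idB (n : ℕ) : Bil n := fun x z => ⟪x, z⟫

/-- The trace-free Ricci tensor `Ric₀(R) = Ric(R) - (scal(R)/n)·id`. -/
def ric0 {n : ℕ} (R : Curv4 n) : Bil n :=
  fun x z => ric R x z - scal R / n * ⟪x, z⟫

/-- The square of a bilinear form, viewed as a symmetric endomorphism:
`B²(x,z) = ∑ₚ B(x,eₚ)·B(eₚ,z)`. -/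
def bilSq {n : ℕ} (B : Bil n) : Bil n :=
  fun x z => ∑ p, B x (stdB n p) * B (stdB n p) z

/-- The squared Frobenius norm `|B|² = tr(B²)` of a bilinear form. -/
def bilNormSq {n : ℕ} (B : Bil n) : ℝ :=
  ∑ i, bilSq B (stdB n i) (stdB n i)

/-- The Kulkarni–Nomizu product of two bilinear forms:
`(A ∧ B)(x,y,z,w) = A(x,z)B(y,w) - A(x,w)B(y,z) - A(y,z)B(x,w) + A(y,w)B(x,z)`. -/
def KN {n : ℕ} (A B : Bil n) : Curv4 n :=
  fun x y z w => A x z * B y w - A x w * B y z - A y z * B x w + A y w * B x z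

/-- Böhm–Wilking's error term
`D_{a,b}(R) = (2b+(n-2)b²-2a)·Ric₀∧Ric₀ + 2a·Ric∧Ric + 2b²·Ric₀²∧id
  + ((nb²(1-2b)-2(a-b)(1-2b+nb²))/(n(1+2(n-1)a)))·|Ric₀|²·id∧id`. -/
def Dab {n : ℕ} (a b : ℝ) (R : Curv4 n) : Curv4 n :=
  fun x y z w =>
    (2 * b + ((n : ℝ) - 2) * b ^ 2 - 2 * a) * KN (ric0 R) (ric0 R) x y z w +
      2 * a * KN (ric R) (ric R) x y z w +
      2 * b ^ 2 * KN (bilSq (ric0 R)) (idB n) x y z w +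
      ((n : ℝ) * b ^ 2 * (1 - 2 * b) - 2 * (a - b) * (1 - 2 * b + (n : ℝ) * b ^ 2)) /
          ((n : ℝ) * (1 + 2 * ((n : ℝ) - 1) * a)) * bilNormSq (ric0 R) *
        KN (idB n) (idB n) x y z w

/-- Böhm–Wilking's linear map
`l_{a,b}(R) = R + b·Ric(R)∧id + (1/n)(a-b)·scal(R)·id∧id`. -/
def lab {n : ℕ} (a b : ℝ) (R : Curv4 n) : Curv4 n :=
  fun x y z w =>
    R x y z w + b * KN (ric R) (idB n) x y z w +
      1 / (n : ℝ) * (a - b) * scal R * KN (idB n) (idB n) x y z w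

end

noncomputable section Aux

def trB {n : ℕ} (A : Bil n) : ℝ := ∑ i, A (stdB n i) (stdB n i)
def crB {n : ℕ} (A B : Bil n) : ℝ := ∑ i, ∑ p, A (stdB n i) (stdB n p) * B (stdB n p) (stdB n i)

lemma idB_std {n : ℕ} (i j : Fin n) : idB n (stdB n i) (stdB n j) = if i = j then 1 else 0 := by
  simp only [idB, stdB, EuclideanSpace.inner_single_left, EuclideanSpace.single_apply]
  simp [eq_comm]

lemma scal_KN {n : ℕ} (A B : Bil n) :
    scal (KN A B) = 2 * (trB A * trB B) - 2 * crB A B := by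
  have h1 : ∀ i : Fin n, ∑ p, A (stdB n i) (stdB n i) * B (stdB n p) (stdB n p)
      = A (stdB n i) (stdB n i) * trB B := by
    intro i; rw [trB, Finset.mul_sum]
  have h4 : ∀ i : Fin n, ∑ p : Fin n, A (stdB n p) (stdB n p) * B (stdB n i) (stdB n i)
      = trB A * B (stdB n i) (stdB n i) := by
    intro i; rw [trB, Finset.sum_mul]
  have hsw : (∑ i : Fin n, ∑ p, A (stdB n p) (stdB n i) * B (stdB n i) (stdB n p)) = crB A B := by
    rw [crB, Finset.sum_comm]
  calc scal (KN A B)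
      = ∑ i : Fin n, ((∑ p, A (stdB n i) (stdB n i) * B (stdB n p) (stdB n p))
          - (∑ p, A (stdB n i) (stdB n p) * B (stdB n p) (stdB n i))
          - (∑ p, A (stdB n p) (stdB n i) * B (stdB n i) (stdB n p))
          + (∑ p, A (stdB n p) (stdB n p) * B (stdB n i) (stdB n i))) := by
        simp [scal, ric, KN, Finset.sum_add_distrib, Finset.sum_sub_distrib]
    _ = 2 * (trB A * trB B) - 2 * crB A B := by
        simp only [Finset.sum_add_distrib, Finset.sum_sub_distrib, h1, h4, hsw]
        rw [← Finset.sum_mul, ← Finset.mul_sum]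
        show trB A * trB B - crB A B - crB A B + trB A * trB B = _
        ring

example {n : ℕ} (R : Curv4 n) : crB (ric R) (ric R) = bilNormSq (ric R) := rfl
example {n : ℕ} (R : Curv4 n) : trB (bilSq (ric0 R)) = bilNormSq (ric0 R) := rfl
example {n : ℕ} (R : Curv4 n) : trB (ric R) = scal R := rfl

lemma trB_idB {n : ℕ} : trB (idB n) = (n : ℝ) := by
  simp [trB, idB_std]

lemma crB_idB {n : ℕ} : crB (idB n) (idB n) = (n : ℝ) := by
  simp [crB, idB_std]

lemma crB_idB_right {n : ℕ} (A : Bil n) : crB A (idB n) = trB A := by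
  simp [crB, trB, idB_std]

lemma trB_ric0 {n : ℕ} (hn : (n:ℝ) ≠ 0) (R : Curv4 n) : trB (ric0 R) = 0 := by
  simp only [trB, ric0]
  rw [Finset.sum_sub_distrib]
  have : ∀ i : Fin n, scal R / (n:ℝ) * ⟪stdB n i, stdB n i⟫ = scal R / (n:ℝ) := by
    intro i
    have := idB_std (n := n) i i
    simp only [idB] at this
    rw [this]; simp
  simp only [this, Finset.sum_const, Finset.card_univ, Fintype.card_fin, nsmul_eq_mul]
  rw [show (∑ i : Fin n, ric R (stdB n i) (stdB n i)) = scal R from rfl]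
  field_simp
  ring

lemma normSq_ric0 {n : ℕ} (hn : (n:ℝ) ≠ 0) (R : Curv4 n) :
    bilNormSq (ric R) = bilNormSq (ric0 R) + scal R ^ 2 / n := by
  have key : ∀ i p : Fin n, ric0 R (stdB n i) (stdB n p) * ric0 R (stdB n p) (stdB n i)
      = ric R (stdB n i) (stdB n p) * ric R (stdB n p) (stdB n i)
        - scal R / n * ((if p = i then 1 else 0) * ric R (stdB n p) (stdB n i))
        - scal R / n * (ric R (stdB n i) (stdB n p) * (if i = p then 1 else 0))
        + (scal R / n) * (scal R / n) * ((if i = p then 1 else 0) * (if p = i then 1 else 0)) := by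
    intro i p
    have h1 := idB_std (n := n) i p
    have h2 := idB_std (n := n) p i
    simp only [idB] at h1 h2
    simp only [ric0, h1, h2]
    by_cases h : i = p <;> simp [h, eq_comm] <;> ring
  have e1 : bilNormSq (ric0 R) = ∑ i : Fin n, ∑ p : Fin n,
      ric0 R (stdB n i) (stdB n p) * ric0 R (stdB n p) (stdB n i) := rfl
  have e2 : bilNormSq (ric R) = ∑ i : Fin n, ∑ p : Fin n,
      ric R (stdB n i) (stdB n p) * ric R (stdB n p) (stdB n i) := rfl
  rw [e1, e2]
  simp only [key, Finset.sum_add_distrib, Finset.sum_sub_distrib, ← Finset.mul_sum,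
    ite_mul, one_mul, zero_mul, mul_ite, mul_one, mul_zero, Finset.sum_ite_eq,
    Finset.sum_ite_eq', Finset.mem_univ, if_true, Finset.sum_const, Finset.card_univ,
    Fintype.card_fin, nsmul_eq_mul]
  rw [show (∑ i : Fin n, ric R (stdB n i) (stdB n i)) = scal R from rfl]
  field_simp
  ring

end Aux

lemma scal_Dab {n : ℕ} (a b : ℝ) (R : Curv4 n) :
    scal (Dab a b R) =
      (2 * b + ((n : ℝ) - 2) * b ^ 2 - 2 * a) * scal (KN (ric0 R) (ric0 R)) +
      2 * a * scal (KN (ric R) (ric R)) +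
      2 * b ^ 2 * scal (KN (bilSq (ric0 R)) (idB n)) +
      ((n : ℝ) * b ^ 2 * (1 - 2 * b) - 2 * (a - b) * (1 - 2 * b + (n : ℝ) * b ^ 2)) /
          ((n : ℝ) * (1 + 2 * ((n : ℝ) - 1) * a)) * bilNormSq (ric0 R) *
        scal (KN (idB n) (idB n)) := by
  unfold scal ric Dab
  simp only [Finset.sum_add_distrib, Finset.mul_sum]
  rfl


/-- for `n ≥ 2`, reals `a, b` with `1+2(n-1)a ≠ 0`, and any algebraic
curvature tensor `R` on `ℝⁿ`,
`scal(D_{a,b}(R)) = -4b·|Ric(R)|² + (4/n)(b+(n-1)a)·scal(R)²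
  + (2(n²b²-2(n-1)(a-b)(1-2b))/(1+2(n-1)a))·|Ric₀(R)|²`. -/
theorem stmt_14 (n : ℕ) (hn : 2 ≤ n) (a b : ℝ)
    (hab : 1 + 2 * ((n : ℝ) - 1) * a ≠ 0)
    (R : Curv4 n) (hR : IsAlgCurv R) :
    scal (Dab a b R) =
      -4 * b * bilNormSq (ric R) +
        4 / (n : ℝ) * (b + ((n : ℝ) - 1) * a) * scal R ^ 2 +
        2 * ((n : ℝ) ^ 2 * b ^ 2 - 2 * ((n : ℝ) - 1) * (a - b) * (1 - 2 * b)) /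
            (1 + 2 * ((n : ℝ) - 1) * a) * bilNormSq (ric0 R) := by
  have hn0 : (n : ℝ) ≠ 0 := by positivity
  rw [scal_Dab, scal_KN, scal_KN, scal_KN, scal_KN, trB_ric0 hn0, trB_idB, crB_idB,
    crB_idB_right]
  rw [show crB (ric0 R) (ric0 R) = bilNormSq (ric0 R) from rfl,
    show crB (ric R) (ric R) = bilNormSq (ric R) from rfl,
    show trB (bilSq (ric0 R)) = bilNormSq (ric0 R) from rfl,
    show trB (ric R) = scal R from rfl,
    normSq_ric0 hn0 R]
  have hab' : 1 + 2 * a * ((n : ℝ) - 1) ≠ 0 := by contrapose! hab; linarith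
  field_simp
  ring
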